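/- Let (Ω, ℱ, P) be a probability space with a filtration (ℱ_t)_{t≥0}, let T ∈ [0,∞], and let f = (f_t)_{t≥0} and g = (g_t)_{t≥0} be nonnegative (ℱ_t)-adapted real-valued processes such that f has right-continuous paths with left limits (cadlag) and g has continuous paths. Assume that E[ f_τ · 1_{{g_0 ≤ c}} ] ≤ E[ g_τ · 1_{{g_0 ≤ c}} ] for every constant c > 0 and every bounded stopping time τ ≤ T. Then for every bounded stopping time τ ≤ T and every γ ∈ (0,1) one has E[ sup_{t ≤ τ} f_t^γ ] ≤ ((2 − γ)/(1 − γ)) · E[ sup_{t ≤ τ} g_t^γ ]. -/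

import Mathlib

open MeasureTheory Filter Set
open scoped NNReal ENNReal Topology
noncomputable section

namespace LenglartAux

variable {Ω : Type*}

lemma measurable_comp_countable {m0 : MeasurableSpace Ω} (f : ℝ≥0 → Ω → ℝ)
    (hf : ∀ t, Measurable (f t)) (v : Ω → ℝ≥0) (hv : Measurable v)
    (hc : (Set.range v).Countable) : Measurable fun ω => f (v ω) ω := by
  intro B hB
  have h : (fun ω => f (v ω) ω) ⁻¹' B =
      ⋃ q ∈ Set.range v, (v ⁻¹' {q}) ∩ (f q ⁻¹' B) := by
    ext ω
    simp only [mem_preimage, mem_iUnion, mem_inter_iff, mem_singleton_iff]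
    constructor
    · intro h; exact ⟨v ω, mem_range_self ω, rfl, h⟩
    · rintro ⟨q, _, rfl, h⟩; exact h
  rw [h]
  exact MeasurableSet.biUnion hc fun q _ => (hv (measurableSet_singleton q)).inter (hf q hB)

/-- dyadic upper approximation -/
def dyad (m : ℕ) (x : ℝ≥0) : ℝ≥0 := ((2:ℝ≥0)^m)⁻¹ * (Nat.ceil (x * 2^m) : ℝ≥0)

lemma le_dyad (m : ℕ) (x : ℝ≥0) : x ≤ dyad m x := by
  have h1 : x * 2^m ≤ (Nat.ceil (x * 2^m) : ℝ≥0) := Nat.le_ceil _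
  have h2 : ((2:ℝ≥0)^m)⁻¹ * (x * 2^m) ≤ ((2:ℝ≥0)^m)⁻¹ * (Nat.ceil (x * 2^m) : ℝ≥0) :=
    mul_le_mul_right h1 _
  calc x = ((2:ℝ≥0)^m)⁻¹ * (x * 2^m) := by
        field_simp
    _ ≤ _ := h2

lemma dyad_le (m : ℕ) (x : ℝ≥0) : dyad m x ≤ x + ((2:ℝ≥0)^m)⁻¹ := by
  have h1 : (Nat.ceil (x * 2^m) : ℝ≥0) ≤ x * 2^m + 1 := by
    exact_mod_cast (Nat.ceil_lt_add_one (zero_le)).le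
  have h2 : ((2:ℝ≥0)^m)⁻¹ * (Nat.ceil (x * 2^m) : ℝ≥0) ≤ ((2:ℝ≥0)^m)⁻¹ * (x * 2^m + 1) :=
    mul_le_mul_right h1 _
  calc dyad m x ≤ ((2:ℝ≥0)^m)⁻¹ * (x * 2^m + 1) := h2
    _ = x + ((2:ℝ≥0)^m)⁻¹ := by
        rw [mul_add, mul_one]
        congr 1
        field_simp

lemma dyad_mono (m : ℕ) : Monotone (dyad m) := fun x y hxy =>
  mul_le_mul_right (by exact_mod_cast Nat.ceil_le_ceil (mul_le_mul_left hxy _)) _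

lemma dyad_range_countable (m : ℕ) : (Set.range (dyad m)).Countable := by
  have : Set.range (dyad m) ⊆ Set.range (fun k : ℕ => ((2:ℝ≥0)^m)⁻¹ * k) := by
    rintro x ⟨y, rfl⟩; exact ⟨Nat.ceil (y * 2^m), rfl⟩
  exact (Set.countable_range _).mono this

lemma tendsto_dyad (x : ℝ≥0) : Tendsto (fun m => dyad m x) atTop (𝓝 x) := by
  have h0 : Tendsto (fun m : ℕ => ((2:ℝ≥0)^m)⁻¹) atTop (𝓝 0) := by
    simp_rw [← inv_pow]
    have : ((2:ℝ≥0))⁻¹ < 1 := by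
      rw [← NNReal.coe_lt_coe]
      push_cast
      norm_num
    exact NNReal.tendsto_pow_atTop_nhds_zero_of_lt_one this
  have h1 : Tendsto (fun m : ℕ => x + ((2:ℝ≥0)^m)⁻¹) atTop (𝓝 (x + 0)) :=
    tendsto_const_nhds.add h0
  rw [add_zero] at h1
  exact tendsto_of_tendsto_of_tendsto_of_le_of_le tendsto_const_nhds h1
    (fun m => le_dyad m x) (fun m => dyad_le m x)

lemma measurable_stoppedValue_of_rightContinuous {m0 : MeasurableSpace Ω}
    (f : ℝ≥0 → Ω → ℝ)
    (hf_rc : ∀ ω t, ContinuousWithinAt (fun s => f s ω) (Set.Ici t) t)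
    (hf : ∀ t, Measurable (f t)) (π : Ω → ℝ≥0) (hπ : Measurable π) :
    Measurable fun ω => f (π ω) ω := by
  have key : ∀ m : ℕ, Measurable fun ω => f (dyad m (π ω)) ω := fun m =>
    measurable_comp_countable f hf (fun ω => dyad m (π ω))
      ((dyad_mono m).measurable.comp hπ)
      ((dyad_range_countable m).mono (Set.range_comp_subset_range π (dyad m)))
  refine measurable_of_tendsto_metrizable key (tendsto_pi_nhds.2 fun ω => ?_)
  have hmem : Tendsto (fun m => dyad m (π ω)) atTop (𝓝[Set.Ici (π ω)] (π ω)) :=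
    tendsto_nhdsWithin_iff.2 ⟨tendsto_dyad (π ω),
      Eventually.of_forall fun m => le_dyad m (π ω)⟩
  exact (hf_rc ω (π ω)).tendsto.comp hmem

/-- cadlag paths are bounded above on compact intervals -/
lemma bddAbove_of_cadlag (h : ℝ≥0 → ℝ)
    (hrc : ∀ t, ContinuousWithinAt h (Set.Ici t) t)
    (hll : ∀ t : ℝ≥0, 0 < t → ∃ L, Tendsto h (𝓝[<] t) (𝓝 L)) (b : ℝ≥0) :
    BddAbove (h '' Set.Icc 0 b) := by
  refine IsCompact.induction_on (isCompact_Icc : IsCompact (Set.Icc (0:ℝ≥0) b))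
    (by simp) (fun s t hsub hb => hb.mono (Set.image_mono hsub))
    (fun s t hs ht => by rw [Set.image_union]; exact hs.union ht) ?_
  intro x _
  have hR : ∀ᶠ y in 𝓝[≥] x, h y < h x + 1 :=
    (hrc x).eventually_lt_const (lt_add_one _)
  have hL : ∃ C : ℝ, ∀ᶠ y in 𝓝[<] x, h y < C := by
    rcases eq_or_lt_of_le (zero_le : 0 ≤ x) with hx0 | hx0
    · refine ⟨0, ?_⟩
      have : Set.Iio x = (∅ : Set ℝ≥0) := by
        ext y; simp [← hx0]
      rw [this, nhdsWithin_empty]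
      exact Filter.eventually_bot
    · obtain ⟨L, hLt⟩ := hll x hx0
      exact ⟨L + 1, hLt.eventually_lt_const (lt_add_one L)⟩
  obtain ⟨C, hC⟩ := hL
  have hev : ∀ᶠ y in 𝓝 x, h y < max C (h x + 1) := by
    rw [← nhdsLT_sup_nhdsGE, eventually_sup]
    exact ⟨hC.mono fun y hy => hy.trans_le (le_max_left _ _),
      hR.mono fun y hy => hy.trans_le (le_max_right _ _)⟩
  obtain ⟨U, hU_nhds, hU⟩ := hev.exists_mem
  refine ⟨U ∩ Set.Icc 0 b,
    inter_mem (mem_nhdsWithin_of_mem_nhds hU_nhds) self_mem_nhdsWithin,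
    max C (h x + 1), ?_⟩
  rintro y ⟨z, ⟨hzU, _⟩, rfl⟩
  exact (hU z hzU).le

/-- sup of a nonneg right-continuous path over `[0,T]` via a countable dense family -/
lemma sSup_image_eq (e : ℕ → ℝ≥0) (he : DenseRange e) (h : ℝ≥0 → ℝ)
    (hrc : ∀ t, ContinuousWithinAt h (Set.Ici t) t) (hnn : ∀ t, 0 ≤ h t)
    (T : ℝ≥0) (hbdd : BddAbove (h '' Set.Icc 0 T)) :
    sSup (h '' Set.Icc 0 T) = max (h T) (⨆ k, if e k ≤ T then h (e k) else 0) := by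
  have hTmem : T ∈ Set.Icc (0:ℝ≥0) T := ⟨zero_le, le_refl _⟩
  have hne : (h '' Set.Icc 0 T).Nonempty := ⟨h T, Set.mem_image_of_mem h hTmem⟩
  obtain ⟨M, hM⟩ := hbdd
  have hbddr : BddAbove (Set.range fun k => if e k ≤ T then h (e k) else 0) := by
    refine ⟨max M 0, ?_⟩
    rintro y ⟨k, rfl⟩
    by_cases hk : e k ≤ T
    · simp only [hk, if_true]
      exact le_max_of_le_left (hM (Set.mem_image_of_mem h ⟨zero_le, hk⟩))
    · simp only [hk, if_false, le_max_iff, le_refl, or_true]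
  apply le_antisymm
  · refine csSup_le hne ?_
    rintro y ⟨s, hs, rfl⟩
    rcases eq_or_lt_of_le hs.2 with rfl | hslt
    · exact le_max_left _ _
    · refine le_of_forall_pos_le_add fun ε hε => ?_
      obtain ⟨δ, hδ, hδ'⟩ := Metric.continuousWithinAt_iff.1 (hrc s) ε hε
      have hVopen : IsOpen (Set.Ioi s ∩ (Set.Iio T ∩ Metric.ball s δ)) :=
        isOpen_Ioi.inter (isOpen_Iio.inter Metric.isOpen_ball)
      have hVne : (Set.Ioi s ∩ (Set.Iio T ∩ Metric.ball s δ)).Nonempty := by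
        have h1 : Set.Iio T ∩ Metric.ball s δ ∈ 𝓝 s :=
          inter_mem (Iio_mem_nhds hslt) (Metric.ball_mem_nhds s hδ)
        have h2 : Set.Ioi s ∩ (Set.Iio T ∩ Metric.ball s δ) ∈ 𝓝[>] s :=
          inter_mem self_mem_nhdsWithin (mem_nhdsWithin_of_mem_nhds h1)
        exact Filter.nonempty_of_mem h2
      obtain ⟨k, hk⟩ := he.exists_mem_open hVopen hVne
      have hks : s < e k := hk.1
      have hkT : e k < T := hk.2.1
      have hdist := hδ' (Set.mem_Ici.2 hks.le) hk.2.2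
      rw [Real.dist_eq, abs_lt] at hdist
      have h1 : h s ≤ h (e k) + ε := by linarith [hdist.1]
      have h2 : h (e k) ≤ ⨆ k, if e k ≤ T then h (e k) else 0 := by
        have := le_ciSup hbddr k
        simpa only [hkT.le, if_true] using this
      calc h s ≤ h (e k) + ε := h1
        _ ≤ (⨆ k, if e k ≤ T then h (e k) else 0) + ε := by linarith
        _ ≤ max (h T) (⨆ k, if e k ≤ T then h (e k) else 0) + ε := by
            have := le_max_right (h T) (⨆ k, if e k ≤ T then h (e k) else 0)
            linarith
  · refine max_le (le_csSup ⟨M, hM⟩ (Set.mem_image_of_mem h hTmem)) (ciSup_le fun k => ?_)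
    by_cases hk : e k ≤ T
    · simp only [hk, if_true]
      exact le_csSup ⟨M, hM⟩ (Set.mem_image_of_mem h ⟨zero_le, hk⟩)
    · simp only [hk, if_false]
      exact (hnn T).trans (le_csSup ⟨M, hM⟩ (Set.mem_image_of_mem h hTmem))

lemma sSup_rpow (s : Set ℝ) (hs : s.Nonempty) (hbdd : BddAbove s) (hnn : ∀ x ∈ s, 0 ≤ x)
    {γ : ℝ} (hγ : 0 < γ) : sSup ((fun x => x ^ γ) '' s) = sSup s ^ γ := by
  have hb2 : BddAbove ((fun x => x ^ γ) '' s) := by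
    refine ⟨sSup s ^ γ, ?_⟩
    rintro y ⟨x, hx, rfl⟩
    exact Real.rpow_le_rpow (hnn x hx) (le_csSup hbdd hx) hγ.le
  apply le_antisymm
  · refine csSup_le (hs.image _) ?_
    rintro y ⟨x, hx, rfl⟩
    exact Real.rpow_le_rpow (hnn x hx) (le_csSup hbdd hx) hγ.le
  · have hcl : sSup s ∈ closure s := csSup_mem_closure hs hbdd
    obtain ⟨u, hu_mem, hu_lim⟩ := mem_closure_iff_seq_limit.1 hcl
    have hcont : ContinuousAt (fun x : ℝ => x ^ γ) (sSup s) :=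
      Real.continuousAt_rpow_const _ _ (Or.inr hγ.le)
    have hT : Tendsto (fun n => u n ^ γ) atTop (𝓝 (sSup s ^ γ)) :=
      hcont.tendsto.comp hu_lim
    exact le_of_tendsto hT (Eventually.of_forall fun n =>
      le_csSup hb2 ⟨u n, hu_mem n, rfl⟩)


lemma lintegral_min_rpow {γ : ℝ} (hγ0 : 0 < γ) (hγ1 : γ < 1) (a : ℝ) (ha : 0 ≤ a) :
    ∫⁻ t in Set.Ioi (0:ℝ), ENNReal.ofReal (min a t) * ENNReal.ofReal (t ^ (γ - 2))
      = ENNReal.ofReal (a ^ γ * (γ⁻¹ + (1 - γ)⁻¹)) := by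
  rcases eq_or_lt_of_le ha with ha0 | ha'
  · have hcong : ∀ t ∈ Set.Ioi (0:ℝ),
        ENNReal.ofReal (min a t) * ENNReal.ofReal (t ^ (γ - 2)) = 0 := by
      intro t ht
      rw [← ha0, min_eq_left (le_of_lt ht), ENNReal.ofReal_zero, zero_mul]
    rw [setLIntegral_congr_fun measurableSet_Ioi hcong, lintegral_zero,
      ← ha0, Real.zero_rpow (ne_of_gt hγ0), zero_mul, ENNReal.ofReal_zero]
  · have hsplit : Set.Ioi (0:ℝ) = Set.Ioc 0 a ∪ Set.Ioi a := (Set.Ioc_union_Ioi_eq_Ioi ha).symm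
    rw [hsplit, lintegral_union measurableSet_Ioi (Set.Ioc_disjoint_Ioi le_rfl)]
    have h1 : ∫⁻ t in Set.Ioc 0 a, ENNReal.ofReal (min a t) * ENNReal.ofReal (t ^ (γ - 2))
        = ENNReal.ofReal (a ^ γ * γ⁻¹) := by
      have hcong : ∀ t ∈ Set.Ioc (0:ℝ) a,
          ENNReal.ofReal (min a t) * ENNReal.ofReal (t ^ (γ - 2))
            = ENNReal.ofReal (t ^ (γ - 1)) := by
        intro t ht
        rw [min_eq_right ht.2, ← ENNReal.ofReal_mul (le_of_lt ht.1)]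
        congr 1
        rw [show γ - 1 = 1 + (γ - 2) by ring, Real.rpow_add ht.1, Real.rpow_one]
      have hint : IntegrableOn (fun t : ℝ => t ^ (γ - 1)) (Set.Ioc 0 a) volume :=
        (intervalIntegral.intervalIntegrable_rpow' (by linarith)).1
      have hnn : 0 ≤ᵐ[volume.restrict (Set.Ioc (0:ℝ) a)] fun t : ℝ => t ^ (γ - 1) := by
        rw [EventuallyLE, ae_restrict_iff' measurableSet_Ioc]
        exact ae_of_all _ fun t ht => Real.rpow_nonneg (le_of_lt ht.1) _
      rw [setLIntegral_congr_fun measurableSet_Ioc hcong,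
        ← ofReal_integral_eq_lintegral_ofReal hint hnn,
        ← intervalIntegral.integral_of_le ha'.le, integral_rpow (Or.inl (by linarith))]
      congr 1
      rw [show γ - 1 + 1 = γ by ring, Real.zero_rpow (ne_of_gt hγ0)]
      ring
    have h2 : ∫⁻ t in Set.Ioi a, ENNReal.ofReal (min a t) * ENNReal.ofReal (t ^ (γ - 2))
        = ENNReal.ofReal (a ^ γ * (1 - γ)⁻¹) := by
      have hcong : ∀ t ∈ Set.Ioi a,
          ENNReal.ofReal (min a t) * ENNReal.ofReal (t ^ (γ - 2))
            = ENNReal.ofReal a * ENNReal.ofReal (t ^ (γ - 2)) := fun t ht => by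
        rw [min_eq_left (le_of_lt ht)]
      have hnn2 : 0 ≤ᵐ[volume.restrict (Set.Ioi a)] fun t : ℝ => t ^ (γ - 2) := by
        rw [EventuallyLE, ae_restrict_iff' measurableSet_Ioi]
        exact ae_of_all _ fun t ht => Real.rpow_nonneg (le_of_lt (lt_trans ha' ht)) _
      have hmeas : Measurable fun t : ℝ => ENNReal.ofReal (t ^ (γ - 2)) :=
        (measurable_id.pow measurable_const).ennreal_ofReal
      rw [setLIntegral_congr_fun measurableSet_Ioi hcong,
        lintegral_const_mul _ hmeas,
        ← ofReal_integral_eq_lintegral_ofReal (integrableOn_Ioi_rpow_of_lt (by linarith) ha') hnn2,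
        integral_Ioi_rpow_of_lt (by linarith) ha', ← ENNReal.ofReal_mul ha]
      have haγ : a * a ^ (γ - 1) = a ^ γ := by
        rw [show γ = 1 + (γ - 1) by ring, Real.rpow_add ha', Real.rpow_one,
          show 1 + (γ - 1) - 1 = γ - 1 by ring]
      congr 1
      rw [show γ - 2 + 1 = γ - 1 by ring, ← haγ]
      have h1γ : γ - 1 ≠ 0 := by linarith
      have h2γ : (1:ℝ) - γ ≠ 0 := by linarith
      field_simp
      ring
    rw [h1, h2, ← ENNReal.ofReal_add (by positivity) ?hnn]
    case hnn =>
      have : (0:ℝ) < 1 - γ := by linarith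
      positivity
    congr 1
    ring

end LenglartAux


/-- A nonnegative cadlag process `f` dominated in the sense
`E[f_τ 1_{g₀ ≤ c}] ≤ E[g_τ 1_{g₀ ≤ c}]` for all bounded stopping times `τ ≤ T` by a
nonnegative continuous process `g` satisfies
`E sup_{t ≤ τ} f_t^γ ≤ (2-γ)/(1-γ) · E sup_{t ≤ τ} g_t^γ` for `γ ∈ (0,1)`. -/
theorem sup_estimate_from_stopped_domination
    {Ω : Type*} {m0 : MeasurableSpace Ω} (P : Measure Ω) [IsProbabilityMeasure P]
    (ℱ : MeasureTheory.Filtration ℝ≥0 m0) (T : ℝ≥0∞)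
    (f g : ℝ≥0 → Ω → ℝ)
    (hf_nonneg : ∀ t ω, 0 ≤ f t ω) (hg_nonneg : ∀ t ω, 0 ≤ g t ω)
    (hf_adapted : MeasureTheory.Adapted ℱ f) (hg_adapted : MeasureTheory.Adapted ℱ g)
    -- `f` has cadlag paths
    (hf_rc : ∀ ω, ∀ t : ℝ≥0, ContinuousWithinAt (fun s => f s ω) (Set.Ici t) t)
    (hf_ll : ∀ ω, ∀ t : ℝ≥0, 0 < t →
      ∃ L : ℝ, Tendsto (fun s => f s ω) (𝓝[<] t) (𝓝 L))
    -- `g` has continuous paths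
    (hg_cont : ∀ ω, Continuous (fun t => g t ω))
    -- the domination hypothesis
    (hdom : ∀ c : ℝ, 0 < c → ∀ τ : Ω → ℝ≥0,
      MeasureTheory.IsStoppingTime ℱ (fun ω => (τ ω : WithTop ℝ≥0)) → (∃ b : ℝ≥0, ∀ ω, τ ω ≤ b) →
      (∀ ω, (τ ω : ℝ≥0∞) ≤ T) →
      (∫⁻ ω in {ω | g 0 ω ≤ c}, ENNReal.ofReal (f (τ ω) ω) ∂P)
        ≤ ∫⁻ ω in {ω | g 0 ω ≤ c}, ENNReal.ofReal (g (τ ω) ω) ∂P) :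
    ∀ τ : Ω → ℝ≥0, MeasureTheory.IsStoppingTime ℱ (fun ω => (τ ω : WithTop ℝ≥0)) → (∃ b : ℝ≥0, ∀ ω, τ ω ≤ b) →
      (∀ ω, (τ ω : ℝ≥0∞) ≤ T) →
      ∀ γ : ℝ, 0 < γ → γ < 1 →
        (∫⁻ ω, ENNReal.ofReal (⨆ t : Set.Icc (0 : ℝ≥0) (τ ω), f t ω ^ γ) ∂P)
          ≤ ENNReal.ofReal ((2 - γ) / (1 - γ)) *
            ∫⁻ ω, ENNReal.ofReal (⨆ t : Set.Icc (0 : ℝ≥0) (τ ω), g t ω ^ γ) ∂P := by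
  obtain ⟨e, he⟩ : ∃ e : ℕ → ℝ≥0, DenseRange e :=
    ⟨TopologicalSpace.denseSeq ℝ≥0, TopologicalSpace.denseRange_denseSeq ℝ≥0⟩
  intro τ hτ hτbdd hτT γ hγ0 hγ1
  obtain ⟨b, hb⟩ := hτbdd
  have hfm : ∀ t, Measurable (f t) := fun t => (hf_adapted t).mono (ℱ.le t) le_rfl
  have hgm : ∀ t, Measurable (g t) := fun t => (hg_adapted t).mono (ℱ.le t) le_rfl
  have hg_rc : ∀ ω (t : ℝ≥0), ContinuousWithinAt (fun s => g s ω) (Set.Ici t) t :=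
    fun ω t => (hg_cont ω).continuousAt.continuousWithinAt
  have hg_ll : ∀ ω (t : ℝ≥0), 0 < t → ∃ L, Tendsto (fun s => g s ω) (𝓝[<] t) (𝓝 L) :=
    fun ω t _ => ⟨g t ω, ((hg_cont ω).tendsto t).mono_left nhdsWithin_le_nhds⟩
  set F : Ω → ℝ := fun ω => sSup ((fun s => f s ω) '' Set.Icc 0 (τ ω)) with hFdef
  set G : Ω → ℝ := fun ω => sSup ((fun s => g s ω) '' Set.Icc 0 (τ ω)) with hGdef
  have hF_eq : ∀ ω, F ω = sSup ((fun s => f s ω) '' Set.Icc 0 (τ ω)) := fun ω => by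
    simp only [hFdef]
  have hG_eq : ∀ ω, G ω = sSup ((fun s => g s ω) '' Set.Icc 0 (τ ω)) := fun ω => by
    simp only [hGdef]
  have hFbdd : ∀ ω, BddAbove ((fun s => f s ω) '' Set.Icc 0 (τ ω)) := fun ω =>
    LenglartAux.bddAbove_of_cadlag _ (hf_rc ω) (hf_ll ω) (τ ω)
  have hGbdd : ∀ ω, BddAbove ((fun s => g s ω) '' Set.Icc 0 (τ ω)) := fun ω =>
    LenglartAux.bddAbove_of_cadlag _ (hg_rc ω) (hg_ll ω) (τ ω)
  have hle_F : ∀ ω (s : ℝ≥0), s ≤ τ ω → f s ω ≤ F ω := fun ω s hs => by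
    rw [hF_eq]
    exact le_csSup (hFbdd ω) (Set.mem_image_of_mem _ ⟨zero_le, hs⟩)
  have hle_G : ∀ ω (s : ℝ≥0), s ≤ τ ω → g s ω ≤ G ω := fun ω s hs => by
    rw [hG_eq]
    exact le_csSup (hGbdd ω) (Set.mem_image_of_mem _ ⟨zero_le, hs⟩)
  have hF_nonneg : ∀ ω, 0 ≤ F ω := fun ω => (hf_nonneg _ ω).trans (hle_F ω (τ ω) le_rfl)
  have hG_nonneg : ∀ ω, 0 ≤ G ω := fun ω => (hg_nonneg _ ω).trans (hle_G ω (τ ω) le_rfl)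
  have hτm : Measurable τ := (by have h := (WithTop.measurable_untopD (0:ℝ≥0)).comp hτ.measurable'; exact h)
  have hfτ_meas : Measurable fun ω => f (τ ω) ω :=
    LenglartAux.measurable_stoppedValue_of_rightContinuous f hf_rc hfm τ hτm
  have hFmeas : Measurable F := by
    have hFeq : F = fun ω => max (f (τ ω) ω) (⨆ k, if e k ≤ τ ω then f (e k) ω else 0) :=
      funext fun ω => (hF_eq ω).trans (LenglartAux.sSup_image_eq e he _ (hf_rc ω)
        (fun t => hf_nonneg t ω) (τ ω) (hFbdd ω))
    rw [hFeq]
    exact hfτ_meas.max (Measurable.iSup fun k => Measurable.ite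
      (measurableSet_le measurable_const hτm) (hfm (e k)) measurable_const)
  have hGmeas : Measurable G := by
    have hgτ_meas : Measurable fun ω => g (τ ω) ω :=
      LenglartAux.measurable_stoppedValue_of_rightContinuous g hg_rc hgm τ hτm
    have hGeq : G = fun ω => max (g (τ ω) ω) (⨆ k, if e k ≤ τ ω then g (e k) ω else 0) :=
      funext fun ω => (hG_eq ω).trans (LenglartAux.sSup_image_eq e he _ (hg_rc ω)
        (fun t => hg_nonneg t ω) (τ ω) (hGbdd ω))
    rw [hGeq]
    exact hgτ_meas.max (Measurable.iSup fun k => Measurable.ite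
      (measurableSet_le measurable_const hτm) (hgm (e k)) measurable_const)
  -- the key Lenglart estimate
  have key : ∀ c : ℝ, 0 < c →
      ENNReal.ofReal c * P {ω | c < F ω} ≤
        (∫⁻ ω, ENNReal.ofReal (min (G ω) c) ∂P) + ENNReal.ofReal c * P {ω | c ≤ G ω} := by
    intro c hc
    set B : ℝ≥0 := b + 1 with hBdef
    have hbB : b < B := lt_add_of_pos_right b one_pos
    set σ : Ω → ℝ≥0 := fun ω => sInf ({s | c ≤ g s ω} ∪ {B}) with hσdef
    set ρ : ℕ → Ω → ℝ≥0 :=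
      fun n ω => sInf ((e '' {k | k ≤ n ∧ c < f (e k) ω}) ∪ {B}) with hρdef
    set π : ℕ → Ω → ℝ≥0 := fun n ω => min (ρ n ω) (min (σ ω) (τ ω)) with hπdef
    -- basic facts about σ
    have hσB : ∀ ω, σ ω ≤ B := fun ω => by
      simp only [hσdef]
      exact csInf_le (OrderBot.bddBelow _) (Set.mem_union_right _ rfl)
    have hσ_le : ∀ ω (x : ℝ≥0), c ≤ g x ω → σ ω ≤ x := fun ω x hx => by
      simp only [hσdef]
      exact csInf_le (OrderBot.bddBelow _) (Set.mem_union_left _ hx)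
    have hσ_ge : ∀ ω (y : ℝ≥0), (∀ x : ℝ≥0, c ≤ g x ω → y ≤ x) → y ≤ B → y ≤ σ ω := by
      intro ω y h1 h2
      simp only [hσdef]
      refine le_csInf ⟨B, Set.mem_union_right _ rfl⟩ ?_
      rintro x (hx | hx)
      · exact h1 x hx
      · rw [Set.mem_singleton_iff] at hx
        rw [hx]
        exact h2
    have hσ_hit : ∀ ω (t : ℝ≥0), t < B → σ ω ≤ t → ∃ s : ℝ≥0, s ≤ t ∧ c ≤ g s ω := by
      intro ω t htB hσt
      by_cases hS : {s : ℝ≥0 | c ≤ g s ω}.Nonempty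
      · have hclosed : IsClosed {s : ℝ≥0 | c ≤ g s ω} :=
          isClosed_le continuous_const (hg_cont ω)
        have hmem := hclosed.csInf_mem hS (OrderBot.bddBelow _)
        have hinf_le : sInf {s : ℝ≥0 | c ≤ g s ω} ≤ t := by
          have hunion : σ ω = min (sInf {s : ℝ≥0 | c ≤ g s ω}) (sInf {B}) := by
            simp only [hσdef]
            exact csInf_union (OrderBot.bddBelow _) hS (OrderBot.bddBelow _) ⟨B, rfl⟩
          rw [csInf_singleton] at hunion
          rcases min_cases (sInf {s : ℝ≥0 | c ≤ g s ω}) B with ⟨hmin, _⟩ | ⟨hmin, _⟩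
          · rw [hunion, hmin] at hσt; exact hσt
          · rw [hunion, hmin] at hσt; exact absurd hσt (not_le.2 htB)
        exact ⟨_, hinf_le, hmem⟩
      · exfalso
        rw [Set.not_nonempty_iff_eq_empty] at hS
        have hσeq : σ ω = B := by simp only [hσdef, hS, Set.empty_union, csInf_singleton]
        rw [hσeq] at hσt
        exact absurd hσt (not_le.2 htB)
    -- σ is a stopping time
    have hσ_st : IsStoppingTime ℱ (fun ω => (σ ω : WithTop ℝ≥0)) := by
      intro t
      simp only [WithTop.coe_le_coe]
      by_cases hBt : B ≤ t
      · have huniv : {ω | σ ω ≤ t} = Set.univ :=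
          Set.eq_univ_of_forall fun ω => le_trans (hσB ω) hBt
        rw [huniv]; exact MeasurableSet.univ
      · push_neg at hBt
        have heq : {ω | σ ω ≤ t} = {ω | c ≤ sSup ((fun s => g s ω) '' Set.Icc 0 t)} := by
          ext ω
          simp only [Set.mem_setOf_eq]
          constructor
          · intro hσt
            obtain ⟨s, hst, hcs⟩ := hσ_hit ω t hBt hσt
            exact le_trans hcs (le_csSup
              (LenglartAux.bddAbove_of_cadlag _ (hg_rc ω) (hg_ll ω) t)
              (Set.mem_image_of_mem _ ⟨zero_le, hst⟩))
          · intro hsup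
            have hcomp : IsCompact ((fun s => g s ω) '' Set.Icc 0 t) :=
              isCompact_Icc.image (hg_cont ω)
            have hne : ((fun s => g s ω) '' Set.Icc 0 t).Nonempty :=
              ⟨g t ω, Set.mem_image_of_mem _ ⟨zero_le, le_refl _⟩⟩
            obtain ⟨s, hs, hval⟩ := hcomp.sSup_mem hne
            have hsS : c ≤ g s ω := hsup.trans (le_of_eq hval.symm)
            exact le_trans (hσ_le ω s hsS) hs.2
        rw [heq]
        have hGt_meas : Measurable[ℱ t] fun ω => sSup ((fun s => g s ω) '' Set.Icc 0 t) := by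
          have heq2 : (fun ω => sSup ((fun s => g s ω) '' Set.Icc 0 t))
              = fun ω => max (g t ω) (⨆ k, if e k ≤ t then g (e k) ω else 0) :=
            funext fun ω => LenglartAux.sSup_image_eq e he _ (hg_rc ω)
              (fun s => hg_nonneg s ω) t
              (LenglartAux.bddAbove_of_cadlag _ (hg_rc ω) (hg_ll ω) t)
          rw [heq2]
          refine Measurable.max (hg_adapted t) (Measurable.iSup fun k => ?_)
          by_cases hk : e k ≤ t
          · simp only [hk, if_true]
            exact (hg_adapted (e k)).mono (ℱ.mono hk) le_rfl
          · simp only [hk, if_false]; exact measurable_const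
        exact hGt_meas measurableSet_Ici
    -- path bound up to σ
    have hσ_path : ∀ ω, g 0 ω ≤ c → ∀ u : ℝ≥0, u ≤ σ ω → g u ω ≤ c := by
      intro ω h0 u hu
      have hlt : ∀ v : ℝ≥0, v < σ ω → g v ω < c := by
        intro v hv
        by_contra hge
        push_neg at hge
        exact absurd (hσ_le ω v hge) (not_le.2 hv)
      rcases eq_or_lt_of_le hu with heq | hlt'
      · rcases eq_or_lt_of_le (zero_le : 0 ≤ u) with h0u | h0u
        · rw [← h0u]; exact h0
        · haveI : (𝓝[<] u).NeBot := nhdsWithin_Iio_self_neBot' ⟨0, h0u⟩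
          have htend : Tendsto (fun v => g v ω) (𝓝[<] u) (𝓝 (g u ω)) :=
            ((hg_cont ω).tendsto u).mono_left nhdsWithin_le_nhds
          refine le_of_tendsto htend ?_
          refine eventually_nhdsWithin_of_forall fun v hv => ?_
          exact (hlt v (lt_of_lt_of_le hv heq.le)).le
      · exact (hlt u hlt').le
    -- τ ≤ σ when the running sup of g is below c
    have hτσ : ∀ ω, G ω < c → τ ω ≤ σ ω := by
      intro ω hG
      refine hσ_ge ω (τ ω) ?_ (le_trans (hb ω) hbB.le)
      intro x hx
      by_contra hltx
      push_neg at hltx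
      exact absurd hG (not_lt.2 (le_trans hx (hle_G ω x hltx.le)))
    -- basic facts about ρ
    have hρfin : ∀ n ω, ((e '' {k | k ≤ n ∧ c < f (e k) ω}) ∪ {B}).Finite := by
      intro n ω
      refine Set.Finite.union (Set.Finite.image _ ?_) (Set.finite_singleton _)
      exact (Set.finite_Iic n).subset fun k hk => hk.1
    have hρne : ∀ n ω, ((e '' {k | k ≤ n ∧ c < f (e k) ω}) ∪ {B}).Nonempty :=
      fun n ω => ⟨B, Set.mem_union_right _ rfl⟩
    have hρ_le : ∀ n ω (k : ℕ), k ≤ n → c < f (e k) ω → ρ n ω ≤ e k := by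
      intro n ω k hk hck
      simp only [hρdef]
      exact csInf_le (OrderBot.bddBelow _) (Set.mem_union_left _ ⟨k, ⟨hk, hck⟩, rfl⟩)
    have hρB : ∀ n ω, ρ n ω ≤ B := fun n ω => by
      simp only [hρdef]
      exact csInf_le (OrderBot.bddBelow _) (Set.mem_union_right _ rfl)
    have hρ_mem : ∀ n ω, ρ n ω = B ∨ ∃ k, k ≤ n ∧ c < f (e k) ω ∧ e k = ρ n ω := by
      intro n ω
      have hmem := (hρne n ω).csInf_mem (hρfin n ω)
      rcases hmem with hmem | hmem
      · obtain ⟨k, ⟨hk1, hk2⟩, hek⟩ := hmem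
        refine Or.inr ⟨k, hk1, hk2, ?_⟩
        simp only [hρdef]
        exact hek
      · rw [Set.mem_singleton_iff] at hmem
        refine Or.inl ?_
        simp only [hρdef]
        exact hmem
    -- ρ n is a stopping time
    have hρ_st : ∀ n, IsStoppingTime ℱ (fun ω => (ρ n ω : WithTop ℝ≥0)) := by
      intro n t
      simp only [WithTop.coe_le_coe]
      have heq : {ω | ρ n ω ≤ t} =
          {ω | B ≤ t} ∪ ⋃ (k : ℕ) (_ : k ≤ n ∧ e k ≤ t), {ω | c < f (e k) ω} := by
        ext ω
        simp only [Set.mem_setOf_eq, Set.mem_union, Set.mem_iUnion]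
        constructor
        · intro hρt
          rcases hρ_mem n ω with hmem | ⟨k, hk1, hk2, hek⟩
          · exact Or.inl (hmem ▸ hρt)
          · exact Or.inr ⟨k, ⟨hk1, le_of_eq_of_le hek hρt⟩, hk2⟩
        · rintro (hBt | ⟨k, ⟨hk1, hk2⟩, hck⟩)
          · exact le_trans (hρB n ω) hBt
          · exact le_trans (hρ_le n ω k hk1 hck) hk2
      rw [heq]
      refine MeasurableSet.union ?_
        (MeasurableSet.iUnion fun k => MeasurableSet.iUnion fun hk => ?_)
      · by_cases hBt : B ≤ t
        · simp only [hBt, Set.setOf_true]; exact @MeasurableSet.univ Ω (ℱ t)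
        · simp only [hBt, Set.setOf_false]; exact @MeasurableSet.empty Ω (ℱ t)
      · exact (hf_adapted (e k)).mono (ℱ.mono hk.2) le_rfl measurableSet_Ioi
    have hρ_anti : ∀ m n : ℕ, m ≤ n → ∀ ω, ρ n ω ≤ ρ m ω := by
      intro m n hmn ω
      simp only [hρdef]
      exact csInf_le_csInf (OrderBot.bddBelow _) (hρne m ω)
        (Set.union_subset_union_left _
          (Set.image_mono fun k hk => ⟨hk.1.trans hmn, hk.2⟩))
    have hρ_val : ∀ n ω, ρ n ω ≤ b → c < f (ρ n ω) ω := by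
      intro n ω hρb
      rcases hρ_mem n ω with hmem | ⟨k, _, hk2, hek⟩
      · rw [hmem] at hρb
        exact absurd hρb (not_le.2 hbB)
      · rw [← hek]
        exact hk2
    -- π facts
    have hπ_eq : ∀ n ω, π n ω = min (ρ n ω) (min (σ ω) (τ ω)) := fun n ω => by
      simp only [hπdef]
    have hπ_st : ∀ n, IsStoppingTime ℱ (fun ω => (π n ω : WithTop ℝ≥0)) := by
      intro n
      have hfun : π n = fun ω => min (ρ n ω) (min (σ ω) (τ ω)) := by
        funext ω; exact hπ_eq n ω
      rw [hfun]
      simpa only [WithTop.coe_min] using (hρ_st n).min (hσ_st.min hτ)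
    have hπ_le_τ : ∀ n ω, π n ω ≤ τ ω := fun n ω => by
      rw [hπ_eq]
      exact (min_le_right _ _).trans (min_le_right _ _)
    have hπ_le_σ : ∀ n ω, π n ω ≤ σ ω := fun n ω => by
      rw [hπ_eq]
      exact (min_le_right _ _).trans (min_le_left _ _)
    -- the approximating events
    set A : ℕ → Set Ω := fun n => ({ω | c < F ω} ∩ {ω | G ω < c}) ∩
        ({ω | ρ n ω ≤ τ ω} ∪ {ω | c < f (τ ω) ω}) with hAdef
    have hA_mem : ∀ n ω, ω ∈ A n ↔
        ((c < F ω ∧ G ω < c) ∧ (ρ n ω ≤ τ ω ∨ c < f (τ ω) ω)) := by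
      intro n ω
      simp only [hAdef, Set.mem_inter_iff, Set.mem_union, Set.mem_setOf_eq]
    have hA_meas : ∀ n, MeasurableSet (A n) := by
      intro n
      simp only [hAdef]
      exact ((measurableSet_lt measurable_const hFmeas).inter
          (measurableSet_lt hGmeas measurable_const)).inter
        ((measurableSet_le (by have h := (WithTop.measurable_untopD (0:ℝ≥0)).comp (hρ_st n).measurable'; exact h)
          hτm).union
          (measurableSet_lt measurable_const hfτ_meas))
    have hA_mono : Monotone A := by
      intro m n hmn ω hω
      rw [hA_mem] at hω ⊢
      obtain ⟨h1, h2⟩ := hω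
      refine ⟨h1, ?_⟩
      rcases h2 with h2 | h2
      · exact Or.inl (le_trans (hρ_anti m n hmn ω) h2)
      · exact Or.inr h2
    have hA_union : {ω | c < F ω} ∩ {ω | G ω < c} ⊆ ⋃ n, A n := by
      rintro ω ⟨hF, hG⟩
      rw [Set.mem_setOf_eq] at hF hG
      have hFne : ((fun s => f s ω) '' Set.Icc 0 (τ ω)).Nonempty :=
        ⟨f (τ ω) ω, Set.mem_image_of_mem _ ⟨zero_le, le_refl _⟩⟩
      have hF' : c < sSup ((fun s => f s ω) '' Set.Icc 0 (τ ω)) := by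
        rw [← hF_eq]; exact hF
      obtain ⟨y, ⟨s, hs, rfl⟩, hy⟩ := exists_lt_of_lt_csSup hFne hF'
      rcases eq_or_lt_of_le hs.2 with heq | hlt
      · exact Set.mem_iUnion.2 ⟨0, (hA_mem 0 ω).2 ⟨⟨hF, hG⟩, Or.inr (heq ▸ hy)⟩⟩
      · have hev : ∀ᶠ y in 𝓝[≥] s, c < f y ω := (hf_rc ω s).eventually_const_lt hy
        obtain ⟨U, hUnhds, hU⟩ := hev.exists_mem
        obtain ⟨V, hVopen, hsV, hVU⟩ := mem_nhdsWithin.1 hUnhds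
        have hWopen : IsOpen (V ∩ Set.Iio (τ ω) ∩ Set.Ioi s) :=
          (hVopen.inter isOpen_Iio).inter isOpen_Ioi
        have hWne : (V ∩ Set.Iio (τ ω) ∩ Set.Ioi s).Nonempty := by
          have h1 : V ∩ Set.Iio (τ ω) ∈ 𝓝 s :=
            inter_mem (hVopen.mem_nhds hsV) (Iio_mem_nhds hlt)
          have h2 : V ∩ Set.Iio (τ ω) ∩ Set.Ioi s ∈ 𝓝[>] s :=
            inter_mem (mem_nhdsWithin_of_mem_nhds h1) self_mem_nhdsWithin
          exact Filter.nonempty_of_mem h2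
        obtain ⟨k, hk⟩ := he.exists_mem_open hWopen hWne
        have hek_lt : c < f (e k) ω := hU _ (hVU ⟨hk.1.1, Set.mem_Ici.2 (le_of_lt (Set.mem_Ioi.1 hk.2))⟩)
        refine Set.mem_iUnion.2 ⟨k, (hA_mem k ω).2 ⟨⟨hF, hG⟩, Or.inl ?_⟩⟩
        exact (hρ_le k ω k (le_refl k) hek_lt).trans (le_of_lt hk.1.2)
    -- the main step estimate
    have hπ_st : ∀ n, IsStoppingTime ℱ (fun ω => (π n ω : WithTop ℝ≥0)) := hπ_st
    have hπ_le_τ : ∀ n ω, π n ω ≤ τ ω := fun n ω => (min_le_right _ _).trans (min_le_right _ _)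
    have hπ_le_σ : ∀ n ω, π n ω ≤ σ ω := fun n ω => (min_le_right _ _).trans (min_le_left _ _)
    have hAsub : ∀ n, A n ⊆ {ω | g 0 ω ≤ c} := by
      intro n ω hω
      rw [hA_mem] at hω
      exact le_trans (hle_G ω 0 (zero_le)) hω.1.2.le
    have hstep : ∀ n, ENNReal.ofReal c * P (A n)
        ≤ ∫⁻ ω, ENNReal.ofReal (min (G ω) c) ∂P := by
      intro n
      have hπmeas : Measurable fun ω => f (π n ω) ω :=
        LenglartAux.measurable_stoppedValue_of_rightContinuous f hf_rc hfm _
          (by have h := (WithTop.measurable_untopD (0:ℝ≥0)).comp (hπ_st n).measurable'; exact h)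
      have h1 : ENNReal.ofReal c * P (A n) = ∫⁻ ω in A n, ENNReal.ofReal c ∂P := by
        rw [setLIntegral_const]
      have h2 : ∫⁻ ω in A n, ENNReal.ofReal c ∂P
          ≤ ∫⁻ ω in A n, ENNReal.ofReal (f (π n ω) ω) ∂P := by
        refine setLIntegral_mono hπmeas.ennreal_ofReal fun ω hω => ?_
        refine ENNReal.ofReal_le_ofReal ?_
        rw [hA_mem] at hω
        obtain ⟨⟨hF, hG⟩, hor⟩ := hω
        have hστ : τ ω ≤ σ ω := hτσ ω hG
        by_cases hρτ : ρ n ω ≤ τ ω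
        · have hπeq : π n ω = ρ n ω := by
            rw [hπ_eq]
            exact min_eq_left (le_min (hρτ.trans hστ) hρτ)
          rw [hπeq]
          exact (hρ_val n ω (hρτ.trans (hb ω))).le
        · have hfτ : c < f (τ ω) ω := by
            rcases hor with h | h
            · exact absurd h hρτ
            · exact h
          have hπeq : π n ω = τ ω := by
            rw [hπ_eq, min_eq_right hστ]
            exact min_eq_right (le_of_not_ge hρτ)
          rw [hπeq]
          exact hfτ.le
      have h3 : ∫⁻ ω in A n, ENNReal.ofReal (f (π n ω) ω) ∂P
          ≤ ∫⁻ ω in {ω | g 0 ω ≤ c}, ENNReal.ofReal (f (π n ω) ω) ∂P :=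
        lintegral_mono_set (hAsub n)
      have h4 := hdom c hc (π n) (hπ_st n) ⟨b, fun ω => (hπ_le_τ n ω).trans (hb ω)⟩
        (fun ω => le_trans (ENNReal.coe_le_coe.2 (hπ_le_τ n ω)) (hτT ω))
      have h5 : ∫⁻ ω in {ω | g 0 ω ≤ c}, ENNReal.ofReal (g (π n ω) ω) ∂P
          ≤ ∫⁻ ω, ENNReal.ofReal (min (G ω) c) ∂P := by
        refine le_trans (setLIntegral_mono
          ((hGmeas.min measurable_const).ennreal_ofReal) fun ω hω => ?_)
          (setLIntegral_le_lintegral _ _)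
        refine ENNReal.ofReal_le_ofReal (le_min ?_ ?_)
        · exact hle_G ω _ (hπ_le_τ n ω)
        · exact hσ_path ω hω _ (hπ_le_σ n ω)
      calc ENNReal.ofReal c * P (A n) = ∫⁻ ω in A n, ENNReal.ofReal c ∂P := h1
        _ ≤ ∫⁻ ω in A n, ENNReal.ofReal (f (π n ω) ω) ∂P := h2
        _ ≤ ∫⁻ ω in {ω | g 0 ω ≤ c}, ENNReal.ofReal (f (π n ω) ω) ∂P := h3
        _ ≤ ∫⁻ ω in {ω | g 0 ω ≤ c}, ENNReal.ofReal (g (π n ω) ω) ∂P := h4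
        _ ≤ ∫⁻ ω, ENNReal.ofReal (min (G ω) c) ∂P := h5
    have hAn_le : ENNReal.ofReal c * P ({ω | c < F ω} ∩ {ω | G ω < c})
        ≤ ∫⁻ ω, ENNReal.ofReal (min (G ω) c) ∂P := by
      have hμ : P ({ω | c < F ω} ∩ {ω | G ω < c}) ≤ ⨆ n, P (A n) := by
        have h := measure_mono (μ := P) hA_union
        rwa [hA_mono.measure_iUnion] at h
      calc ENNReal.ofReal c * P ({ω | c < F ω} ∩ {ω | G ω < c})
          ≤ ENNReal.ofReal c * ⨆ n, P (A n) := mul_le_mul_right hμ _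
        _ = ⨆ n, ENNReal.ofReal c * P (A n) := by rw [ENNReal.mul_iSup]
        _ ≤ _ := iSup_le hstep
    have hsplit : P {ω | c < F ω} ≤
        P ({ω | c < F ω} ∩ {ω | G ω < c}) + P {ω | c ≤ G ω} := by
      refine le_trans (measure_mono ?_) (measure_union_le _ _)
      intro ω hω
      by_cases hG : G ω < c
      · exact Or.inl ⟨hω, hG⟩
      · exact Or.inr (not_lt.1 hG)
    calc ENNReal.ofReal c * P {ω | c < F ω}
        ≤ ENNReal.ofReal c * (P ({ω | c < F ω} ∩ {ω | G ω < c}) + P {ω | c ≤ G ω}) :=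
          mul_le_mul_right hsplit _
      _ = ENNReal.ofReal c * P ({ω | c < F ω} ∩ {ω | G ω < c})
          + ENNReal.ofReal c * P {ω | c ≤ G ω} := mul_add _ _ _
      _ ≤ _ := add_le_add_left hAn_le _
  -- rewrite the integrands via F and G
  have hsup_f : ∀ ω, (⨆ t : Set.Icc (0:ℝ≥0) (τ ω), f t ω ^ γ) = F ω ^ γ := by
    intro ω
    have hiSup : (⨆ t : Set.Icc (0:ℝ≥0) (τ ω), f t ω ^ γ)
        = sSup ((fun t : ℝ≥0 => f t ω ^ γ) '' Set.Icc 0 (τ ω)) := by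
      rw [iSup]
      congr 1
      rw [show (Set.range fun t : Set.Icc (0:ℝ≥0) (τ ω) => f t ω ^ γ)
          = Set.range ((fun t : ℝ≥0 => f t ω ^ γ) ∘ (Subtype.val)) from rfl,
        Set.range_comp, Subtype.range_coe]
    rw [hiSup, hF_eq ω, ← LenglartAux.sSup_rpow ((fun s => f s ω) '' Set.Icc 0 (τ ω))
      ⟨f (τ ω) ω, Set.mem_image_of_mem _ ⟨zero_le, le_refl _⟩⟩ (hFbdd ω)
      (by rintro x ⟨s, hs, rfl⟩; exact hf_nonneg s ω) hγ0]
    congr 1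
    rw [Set.image_image]
  have hsup_g : ∀ ω, (⨆ t : Set.Icc (0:ℝ≥0) (τ ω), g t ω ^ γ) = G ω ^ γ := by
    intro ω
    have hiSup : (⨆ t : Set.Icc (0:ℝ≥0) (τ ω), g t ω ^ γ)
        = sSup ((fun t : ℝ≥0 => g t ω ^ γ) '' Set.Icc 0 (τ ω)) := by
      rw [iSup]
      congr 1
      rw [show (Set.range fun t : Set.Icc (0:ℝ≥0) (τ ω) => g t ω ^ γ)
          = Set.range ((fun t : ℝ≥0 => g t ω ^ γ) ∘ (Subtype.val)) from rfl,
        Set.range_comp, Subtype.range_coe]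
    rw [hiSup, hG_eq ω, ← LenglartAux.sSup_rpow ((fun s => g s ω) '' Set.Icc 0 (τ ω))
      ⟨g (τ ω) ω, Set.mem_image_of_mem _ ⟨zero_le, le_refl _⟩⟩ (hGbdd ω)
      (by rintro x ⟨s, hs, rfl⟩; exact hg_nonneg s ω) hγ0]
    congr 1
    rw [Set.image_image]
  rw [lintegral_congr fun ω => congrArg ENNReal.ofReal (hsup_f ω),
    lintegral_congr fun ω => congrArg ENNReal.ofReal (hsup_g ω)]
  -- layer cake
  have hlcF := lintegral_rpow_eq_lintegral_meas_lt_mul P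
    (ae_of_all _ hF_nonneg) hFmeas.aemeasurable hγ0
  have hlcG := lintegral_rpow_eq_lintegral_meas_le_mul P
    (ae_of_all _ hG_nonneg) hGmeas.aemeasurable hγ0
  rw [hlcF]
  have hEG : ∫⁻ ω, ENNReal.ofReal (G ω ^ γ) ∂P
      = ENNReal.ofReal γ * ∫⁻ (t : ℝ) in Set.Ioi (0:ℝ), P {a | t ≤ G a}
        * ENNReal.ofReal (t ^ (γ - 1)) := hlcG
  -- pointwise bound under the t-integral
  have hpt : ∀ t ∈ Set.Ioi (0:ℝ), P {a | t < F a} * ENNReal.ofReal (t ^ (γ - 1))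
      ≤ (∫⁻ ω, ENNReal.ofReal (min (G ω) t) ∂P) * ENNReal.ofReal (t ^ (γ - 2))
        + P {a | t ≤ G a} * ENNReal.ofReal (t ^ (γ - 1)) := by
    intro t ht
    rw [Set.mem_Ioi] at ht
    have hfac : ENNReal.ofReal (t ^ (γ - 1))
        = ENNReal.ofReal t * ENNReal.ofReal (t ^ (γ - 2)) := by
      rw [← ENNReal.ofReal_mul ht.le]
      congr 1
      rw [show γ - 1 = 1 + (γ - 2) by ring, Real.rpow_add ht, Real.rpow_one]
    calc P {a | t < F a} * ENNReal.ofReal (t ^ (γ - 1))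
        = (ENNReal.ofReal t * P {a | t < F a}) * ENNReal.ofReal (t ^ (γ - 2)) := by
          rw [hfac]; ring
      _ ≤ ((∫⁻ ω, ENNReal.ofReal (min (G ω) t) ∂P)
            + ENNReal.ofReal t * P {a | t ≤ G a}) * ENNReal.ofReal (t ^ (γ - 2)) :=
          mul_le_mul_left (key t ht) _
      _ = (∫⁻ ω, ENNReal.ofReal (min (G ω) t) ∂P) * ENNReal.ofReal (t ^ (γ - 2))
          + P {a | t ≤ G a} * (ENNReal.ofReal t * ENNReal.ofReal (t ^ (γ - 2))) := by
          ring
      _ = _ := by rw [← hfac]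
  -- measurability of the pieces in t
  have hI_mono : Monotone fun t : ℝ => ∫⁻ ω, ENNReal.ofReal (min (G ω) t) ∂P := by
    intro s t hst
    exact lintegral_mono fun ω => ENNReal.ofReal_le_ofReal (min_le_min (le_refl _) hst)
  have hG_anti : Antitone fun t : ℝ => P {a | t ≤ G a} := by
    intro s t hst
    exact measure_mono fun ω hω => le_trans hst hω
  have hrpow_meas : ∀ r : ℝ, Measurable fun t : ℝ => ENNReal.ofReal (t ^ r) :=
    fun r => (measurable_id.pow measurable_const).ennreal_ofReal
  have hbound : (∫⁻ (t : ℝ) in Set.Ioi (0:ℝ), P {a | t < F a} * ENNReal.ofReal (t ^ (γ - 1)))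
      ≤ (∫⁻ (t : ℝ) in Set.Ioi (0:ℝ), (∫⁻ ω, ENNReal.ofReal (min (G ω) t) ∂P)
          * ENNReal.ofReal (t ^ (γ - 2)))
        + ∫⁻ (t : ℝ) in Set.Ioi (0:ℝ), P {a | t ≤ G a} * ENNReal.ofReal (t ^ (γ - 1)) := by
    rw [← lintegral_add_left ((hI_mono.measurable).fun_mul (hrpow_meas _))]
    exact setLIntegral_mono
      (((hI_mono.measurable).mul (hrpow_meas _)).add
        ((hG_anti.measurable).mul (hrpow_meas _))) hpt
  -- compute the min-term via Tonelli
  have hmin_term : (∫⁻ (t : ℝ) in Set.Ioi (0:ℝ), (∫⁻ ω, ENNReal.ofReal (min (G ω) t) ∂P)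
        * ENNReal.ofReal (t ^ (γ - 2)))
      = ENNReal.ofReal (γ⁻¹ + (1 - γ)⁻¹) * ∫⁻ ω, ENNReal.ofReal (G ω ^ γ) ∂P := by
    have hswap : (∫⁻ (t : ℝ) in Set.Ioi (0:ℝ), ∫⁻ ω, ENNReal.ofReal (min (G ω) t)
          * ENNReal.ofReal (t ^ (γ - 2)) ∂P)
        = ∫⁻ ω, (∫⁻ (t : ℝ) in Set.Ioi (0:ℝ), ENNReal.ofReal (min (G ω) t)
            * ENNReal.ofReal (t ^ (γ - 2))) ∂P := by
      refine lintegral_lintegral_swap ?_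
      refine Measurable.aemeasurable ?_
      refine Measurable.fun_mul ?_ ?_
      · exact ((hGmeas.comp measurable_snd).min measurable_fst).ennreal_ofReal
      · exact ((measurable_fst.pow measurable_const)).ennreal_ofReal
    calc (∫⁻ (t : ℝ) in Set.Ioi (0:ℝ), (∫⁻ ω, ENNReal.ofReal (min (G ω) t) ∂P)
          * ENNReal.ofReal (t ^ (γ - 2)))
        = ∫⁻ (t : ℝ) in Set.Ioi (0:ℝ), ∫⁻ ω, ENNReal.ofReal (min (G ω) t)
            * ENNReal.ofReal (t ^ (γ - 2)) ∂P := by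
          refine setLIntegral_congr_fun measurableSet_Ioi (fun t ht => ?_)
          rw [lintegral_mul_const _ ((hGmeas.min measurable_const).ennreal_ofReal)]
      _ = ∫⁻ ω, (∫⁻ (t : ℝ) in Set.Ioi (0:ℝ), ENNReal.ofReal (min (G ω) t)
            * ENNReal.ofReal (t ^ (γ - 2))) ∂P := hswap
      _ = ∫⁻ ω, ENNReal.ofReal (G ω ^ γ * (γ⁻¹ + (1 - γ)⁻¹)) ∂P := by
          refine lintegral_congr fun ω => ?_
          exact LenglartAux.lintegral_min_rpow hγ0 hγ1 (G ω) (hG_nonneg ω)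
      _ = ENNReal.ofReal (γ⁻¹ + (1 - γ)⁻¹) * ∫⁻ ω, ENNReal.ofReal (G ω ^ γ) ∂P := by
          rw [← lintegral_const_mul _ ((hGmeas.pow measurable_const).ennreal_ofReal)]
          refine lintegral_congr fun ω => ?_
          rw [← ENNReal.ofReal_mul ?hnn, mul_comm]
          case hnn =>
            have h1γ : (0:ℝ) < 1 - γ := by linarith
            positivity
  -- assemble
  have h1γpos : (0:ℝ) < 1 - γ := by linarith
  calc ENNReal.ofReal γ * ∫⁻ (t : ℝ) in Set.Ioi (0:ℝ), P {a | t < F a} * ENNReal.ofReal (t ^ (γ - 1))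
      ≤ ENNReal.ofReal γ * ((ENNReal.ofReal (γ⁻¹ + (1 - γ)⁻¹)
          * ∫⁻ ω, ENNReal.ofReal (G ω ^ γ) ∂P)
        + ∫⁻ (t : ℝ) in Set.Ioi (0:ℝ), P {a | t ≤ G a} * ENNReal.ofReal (t ^ (γ - 1))) := by
        refine mul_le_mul_right ?_ _
        rw [← hmin_term]
        exact hbound
    _ = ENNReal.ofReal γ * ENNReal.ofReal (γ⁻¹ + (1 - γ)⁻¹)
          * ∫⁻ ω, ENNReal.ofReal (G ω ^ γ) ∂P
        + ENNReal.ofReal γ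
          * ∫⁻ (t : ℝ) in Set.Ioi (0:ℝ), P {a | t ≤ G a} * ENNReal.ofReal (t ^ (γ - 1)) := by
        ring
    _ = ENNReal.ofReal (1 + γ / (1 - γ)) * ∫⁻ ω, ENNReal.ofReal (G ω ^ γ) ∂P
        + ∫⁻ ω, ENNReal.ofReal (G ω ^ γ) ∂P := by
        rw [← hEG, ← ENNReal.ofReal_mul hγ0.le]
        congr 3
        field_simp
    _ = ENNReal.ofReal ((2 - γ) / (1 - γ))
          * ∫⁻ ω, ENNReal.ofReal (G ω ^ γ) ∂P := by
        rw [show ENNReal.ofReal ((2 - γ) / (1 - γ))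
            = ENNReal.ofReal (1 + γ / (1 - γ)) + 1 by
          rw [← ENNReal.ofReal_one, ← ENNReal.ofReal_add (by positivity) zero_le_one]
          congr 1
          field_simp
          ring]
        ring
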